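/- For every real k, the normalization constant of the isotropic Langevin distribution on SO(3) satisfies c_3(k) = (1/2π) ∫_0^{2π} (1 − cos φ) exp(k(1 + 2 cos φ)) dφ = e^k ( Σ_{n=0}^{∞} k^{2n}/(n!)² − Σ_{n=0}^{∞} k^{2n+1}/(n!(n+1)!) ), i.e. c_3(k) = e^k (I_0(2k) − I_1(2k)) with the modified Bessel functions given by their power series. -/

import Mathlib

open intervalIntegral Real MeasureTheory

noncomputable def cI (m : ℕ) : ℝ := ∫ φ in (0:ℝ)..(2*Real.pi), Real.cos φ ^ m

open intervalIntegral Real MeasureTheory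


lemma cI_rec (m : ℕ) : cI (m+2) = (m+1)/(m+2) * cI m := by
  unfold cI
  rw [integral_cos_pow]
  simp [Real.sin_two_pi]

lemma cI_zero : cI 0 = 2 * Real.pi := by simp [cI]

lemma cI_one : cI 1 = 0 := by simp [cI, Real.sin_two_pi]

lemma cI_odd (n : ℕ) : cI (2*n+1) = 0 := by
  induction n with
  | zero => simpa using cI_one
  | succ n ih =>
      have : 2*(n+1)+1 = (2*n+1)+2 := by ring
      rw [this, cI_rec, ih, mul_zero]

lemma cI_even (n : ℕ) :
    cI (2*n) = 2 * Real.pi * (Nat.factorial (2*n)) / (4^n * (Nat.factorial n)^2) := by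
  induction n with
  | zero => simpa using cI_zero
  | succ n ih =>
      have h : 2*(n+1) = 2*n+2 := by ring
      rw [h, cI_rec, ih]
      have h1 : Nat.factorial (2*n+2) = (2*n+2)*(2*n+1)*Nat.factorial (2*n) := by
        have : 2*n+2 = (2*n+1)+1 := by ring
        rw [this, Nat.factorial_succ, Nat.factorial_succ]
        ring
      have h2 : Nat.factorial (n+1) = (n+1)*Nat.factorial n := Nat.factorial_succ n
      rw [h1, h2]
      have hf : (Nat.factorial n : ℝ) ≠ 0 := Nat.cast_ne_zero.2 n.factorial_ne_zero
      have h4 : (4:ℝ)^n ≠ 0 := by positivity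
      push_cast
      field_simp
      ring
noncomputable def Fm (k : ℝ) (m : ℕ) (φ : ℝ) : ℝ :=
  (1 - Real.cos φ) * ((2*k*Real.cos φ)^m / Nat.factorial m)

lemma term_eval (k : ℝ) (m : ℕ) :
    (∫ φ in (0:ℝ)..(2*Real.pi), Fm k m φ)
      = (2*k)^m / Nat.factorial m * (cI m - cI (m+1)) := by
  have h : ∀ φ:ℝ, Fm k m φ
      = (2*k)^m / Nat.factorial m * (Real.cos φ ^ m - Real.cos φ ^ (m+1)) := by
    intro φ; rw [Fm, mul_pow]; ring
  simp_rw [h]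
  rw [intervalIntegral.integral_const_mul, intervalIntegral.integral_sub] <;>
    first
      | rfl
      | exact (Continuous.pow (Real.continuous_cos) _).intervalIntegrable _ _

lemma Fm_cont (k : ℝ) (m : ℕ) : Continuous (Fm k m) := by
  unfold Fm; fun_prop

lemma Fm_norm_le (k : ℝ) (m : ℕ) (φ : ℝ) :
    ‖Fm k m φ‖ ≤ 2 * (2*|k|)^m / Nat.factorial m := by
  have h1 : |1 - Real.cos φ| ≤ 2 := by
    have := Real.neg_one_le_cos φ
    have := Real.cos_le_one φ
    rw [abs_le]; constructor <;> linarith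
  have h2 : |2*k*Real.cos φ| ≤ 2*|k| := by
    rw [abs_mul, abs_mul, abs_two]
    have := Real.abs_cos_le_one φ
    nlinarith [abs_nonneg k]
  calc ‖Fm k m φ‖ = |1 - Real.cos φ| * (|2*k*Real.cos φ|^m / Nat.factorial m) := by
        rw [Fm]; simp [abs_mul, abs_div, abs_pow, Nat.abs_cast]
    _ ≤ 2 * ((2*|k|)^m / Nat.factorial m) := by
        apply mul_le_mul h1 _ (by positivity) (by norm_num)
        apply div_le_div_of_nonneg_right _ (by positivity)
        exact pow_le_pow_left₀ (abs_nonneg _) h2 m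
    _ = 2 * (2*|k|)^m / Nat.factorial m := by ring

lemma swap_lemma (k : ℝ) :
    (∫ φ in (0:ℝ)..(2*Real.pi), (1 - Real.cos φ) * Real.exp (2*k*Real.cos φ))
      = ∑' m : ℕ, (2*k)^m / Nat.factorial m * (cI m - cI (m+1)) := by
  have h2π : (0:ℝ) ≤ 2*Real.pi := Real.two_pi_pos.le
  have hint : ∀ m, Integrable (Fm k m) (volume.restrict (Set.Ioc (0:ℝ) (2*Real.pi))) :=
    fun m => (Fm_cont k m).integrableOn_Ioc
  have hnorm : ∀ m, (∫ φ in Set.Ioc (0:ℝ) (2*Real.pi), ‖Fm k m φ‖)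
      ≤ (2 * (2*|k|)^m / Nat.factorial m) * (2*Real.pi) := by
    intro m
    calc (∫ φ in Set.Ioc (0:ℝ) (2*Real.pi), ‖Fm k m φ‖)
        ≤ ∫ _ in Set.Ioc (0:ℝ) (2*Real.pi), (2 * (2*|k|)^m / Nat.factorial m) := by
          exact integral_mono (hint m).norm (integrable_const _) (fun φ => Fm_norm_le k m φ)
      _ = (2 * (2*|k|)^m / Nat.factorial m) * (2*Real.pi) := by
          rw [MeasureTheory.integral_const, measureReal_def, Measure.restrict_apply_univ]
          rw [Real.volume_Ioc, smul_eq_mul]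
          rw [show (2*Real.pi - 0) = 2*Real.pi by ring, ENNReal.toReal_ofReal h2π]
          ring
  have hsum : Summable fun m => ∫ φ in Set.Ioc (0:ℝ) (2*Real.pi), ‖Fm k m φ‖ := by
    have hpos : ∀ m:ℕ, (0:ℝ) ≤ ∫ φ in Set.Ioc (0:ℝ) (2*Real.pi), ‖Fm k m φ‖ :=
      fun m => integral_nonneg fun φ => norm_nonneg _
    have hBig := ((Real.summable_pow_div_factorial (2*|k|)).mul_left 2).mul_right (2*Real.pi)
    exact Summable.of_nonneg_of_le hpos hnorm (hBig.congr (fun m => by ring))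
  have key := integral_tsum_of_summable_integral_norm hint hsum
  have hpt : ∀ φ:ℝ, (∑' m, Fm k m φ) = (1 - Real.cos φ) * Real.exp (2*k*Real.cos φ) := by
    intro φ
    have : Real.exp (2*k*Real.cos φ) = ∑' n:ℕ, (2*k*Real.cos φ)^n / Nat.factorial n := by
      rw [Real.exp_eq_exp_ℝ, NormedSpace.exp_eq_tsum_div]
    rw [this]
    unfold Fm
    exact tsum_mul_left
  rw [intervalIntegral.integral_of_le h2π]
  rw [show (∫ φ in Set.Ioc (0:ℝ) (2*Real.pi),
      (1 - Real.cos φ) * Real.exp (2*k*Real.cos φ)) = ∫ φ in Set.Ioc (0:ℝ) (2*Real.pi), (∑' m, Fm k m φ) from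
    integral_congr_ae (Filter.Eventually.of_forall fun φ => (hpt φ).symm)]
  rw [← key]
  apply tsum_congr
  intro m
  rw [← term_eval k m, intervalIntegral.integral_of_le h2π]

lemma even_term (k : ℝ) (n : ℕ) :
    (2*k)^(2*n) / Nat.factorial (2*n) * (cI (2*n) - cI (2*n+1))
      = 2*Real.pi * (k^(2*n) / ((Nat.factorial n : ℝ))^2) := by
  rw [cI_odd, cI_even, sub_zero]
  have hf : ((Nat.factorial n : ℝ)) ≠ 0 := Nat.cast_ne_zero.2 n.factorial_ne_zero
  have hf2 : ((Nat.factorial (2*n) : ℝ)) ≠ 0 := Nat.cast_ne_zero.2 (2*n).factorial_ne_zero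
  have h4 : (4:ℝ)^n ≠ 0 := by positivity
  have hk : ((2:ℝ)*k)^(2*n) = 4^n * k^(2*n) := by
    rw [mul_pow, pow_mul]; norm_num
  rw [hk]
  field_simp

lemma odd_term (k : ℝ) (n : ℕ) :
    (2*k)^(2*n+1) / Nat.factorial (2*n+1) * (cI (2*n+1) - cI (2*n+1+1))
      = (-(2*Real.pi)) * (k^(2*n+1) / ((Nat.factorial n : ℝ) * (Nat.factorial (n+1) : ℝ))) := by
  have h2 : 2*n+1+1 = 2*(n+1) := by ring
  rw [cI_odd, h2, cI_even, zero_sub]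
  have hf : ((Nat.factorial n : ℝ)) ≠ 0 := Nat.cast_ne_zero.2 n.factorial_ne_zero
  have hf1 : ((Nat.factorial (n+1) : ℝ)) ≠ 0 := Nat.cast_ne_zero.2 (n+1).factorial_ne_zero
  have hf2 : ((Nat.factorial (2*n+1) : ℝ)) ≠ 0 := Nat.cast_ne_zero.2 (2*n+1).factorial_ne_zero
  have h4 : (4:ℝ)^n ≠ 0 := by positivity
  have e1 : ((Nat.factorial (2*(n+1)) : ℝ)) = (2*n+2) * Nat.factorial (2*n+1) := by
    rw [show 2*(n+1) = (2*n+1)+1 by ring, Nat.factorial_succ]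
    push_cast; ring
  have e2 : ((Nat.factorial (n+1) : ℝ)) = (n+1) * Nat.factorial n := by
    rw [Nat.factorial_succ]; push_cast; ring
  have p : (2:ℝ)^(2*n+1) = 4^n*2 := by rw [pow_succ, pow_mul]; norm_num
  have e3 : ((2:ℝ)*k)^(2*n+1) = 2 * 4^n * k^(2*n+1) := by
    rw [mul_pow, p]; ring
  rw [e1, e3, show (4:ℝ)^(n+1) = 4 * 4^n by rw [pow_succ]; ring]
  rw [e2]
  field_simp
  ring

lemma sumE (k : ℝ) : Summable fun n : ℕ => k^(2*n) / ((Nat.factorial n : ℝ))^2 := by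
  have hb := Real.summable_pow_div_factorial (k^2)
  apply Summable.of_nonneg_of_le _ _ hb
  · intro n
    rw [pow_mul]; positivity
  · intro n
    rw [pow_mul]
    have h1 : (1:ℝ) ≤ (Nat.factorial n : ℝ) := by
      exact_mod_cast Nat.one_le_iff_ne_zero.2 n.factorial_ne_zero
    have h2 : (Nat.factorial n : ℝ) ≤ ((Nat.factorial n : ℝ))^2 := by nlinarith
    gcongr

lemma sumO (k : ℝ) :
    Summable fun n : ℕ => k^(2*n+1) / ((Nat.factorial n : ℝ) * (Nat.factorial (n+1) : ℝ)) := by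
  rw [← summable_abs_iff]
  have hb := (Real.summable_pow_div_factorial (k^2)).mul_left |k|
  apply Summable.of_nonneg_of_le (fun n => abs_nonneg _) _ hb
  intro n
  have h1 : (1:ℝ) ≤ (Nat.factorial (n+1) : ℝ) := by
    exact_mod_cast Nat.one_le_iff_ne_zero.2 (n+1).factorial_ne_zero
  have hfpos : (0:ℝ) < (Nat.factorial n : ℝ) := by
    exact_mod_cast n.factorial_pos
  have habs : |k^(2*n+1) / ((Nat.factorial n : ℝ) * (Nat.factorial (n+1) : ℝ))|
      = |k| * (k^2)^n / ((Nat.factorial n : ℝ) * (Nat.factorial (n+1) : ℝ)) := by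
    rw [abs_div, abs_pow, pow_succ, pow_mul]
    rw [abs_of_pos (by positivity : (0:ℝ) < (Nat.factorial n : ℝ) * (Nat.factorial (n+1) : ℝ))]
    rw [sq_abs]
    ring
  rw [habs, mul_div_assoc]
  gcongr
  nlinarith

lemma tsum_eval (k : ℝ) :
    (∑' m : ℕ, (2*k)^m / Nat.factorial m * (cI m - cI (m+1)))
      = 2*Real.pi * ((∑' n : ℕ, k^(2*n) / ((Nat.factorial n : ℝ))^2)
          - ∑' n : ℕ, k^(2*n+1) / ((Nat.factorial n : ℝ) * (Nat.factorial (n+1) : ℝ))) := by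
  have hE : Summable fun n : ℕ => (2*k)^(2*n) / Nat.factorial (2*n) * (cI (2*n) - cI (2*n+1)) :=
    ((sumE k).mul_left (2*Real.pi)).congr (fun n => (even_term k n).symm)
  have hO : Summable fun n : ℕ =>
      (2*k)^(2*n+1) / Nat.factorial (2*n+1) * (cI (2*n+1) - cI (2*n+1+1)) :=
    ((sumO k).mul_left (-(2*Real.pi))).congr (fun n => (odd_term k n).symm)
  rw [← tsum_even_add_odd (f := fun m => (2*k)^m / Nat.factorial m * (cI m - cI (m+1))) hE hO]
  rw [tsum_congr (even_term k), tsum_congr (odd_term k)]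
  rw [tsum_mul_left, tsum_mul_left]
  ring

/-- The normalization constant of the isotropic Langevin distribution on SO(3)
satisfies `c₃(k) = (1/2π) ∫_0^{2π} (1 - cos φ) exp(k(1 + 2cos φ)) dφ
= e^k (I₀(2k) - I₁(2k))` with the modified Bessel functions given by their power series. -/
theorem stmt17 (k : ℝ) :
    (1 / (2 * Real.pi)) *
        ∫ φ in (0:ℝ)..(2 * Real.pi),
          (1 - Real.cos φ) * Real.exp (k * (1 + 2 * Real.cos φ)) =
      Real.exp k *
        ((∑' n : ℕ, k ^ (2 * n) / ((Nat.factorial n : ℝ)) ^ 2) -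
          ∑' n : ℕ, k ^ (2 * n + 1) /
            ((Nat.factorial n : ℝ) * (Nat.factorial (n + 1) : ℝ))) := by
  have h : ∀ φ:ℝ, (1 - Real.cos φ) * Real.exp (k * (1 + 2 * Real.cos φ))
      = Real.exp k * ((1 - Real.cos φ) * Real.exp (2*k*Real.cos φ)) := by
    intro φ
    rw [show k * (1 + 2 * Real.cos φ) = k + 2*k*Real.cos φ by ring, Real.exp_add]
    ring
  simp_rw [h]
  rw [intervalIntegral.integral_const_mul, swap_lemma, tsum_eval]
  have hπ : Real.pi ≠ 0 := Real.pi_ne_zero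
  field_simp
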